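/- Let A be a unital C*-algebra and let α, γ ∈ A satisfy the SU_q(2) relations; let v_{i,j} = v_{i,j}(α, γ). Then for all r, p ∈ {−1, 0, 1}: σ²·ζ^{r(p−1)}·v_{0,r}v_{1,p} − ςσ²·ζ^{rp}·v_{1,r}v_{0,p} equals 0 if r + p ∉ {−1, 0, 1}, and equals λ_{r,p}·v_{1,r+p} otherwise, where λ_{−1,0} = σ², λ_{−1,1} = −ς, λ_{0,−1} = −ςσ², λ_{0,0} = 1 − ς², λ_{0,1} = σ², λ_{1,−1} = ς, λ_{1,0} = −ςσ². -/

import Mathlib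

open scoped ComplexConjugate

/-- Elements `α`, `γ` of a unital C*-algebra satisfy the SU_q(2) relations. -/
def SUq2Rel {A : Type*} [Ring A] [StarRing A] [Module ℂ A] (q : ℂ) (α γ : A) : Prop :=
  star α * α + star γ * γ = 1 ∧
  α * star α + ((‖q‖ : ℂ) ^ 2) • (star γ * γ) = 1 ∧
  α * γ = conj q • (γ * α) ∧
  γ * star γ = star γ * γ

/-- `ζ = q / conj q`. -/
noncomputable def zetaC (q : ℂ) : ℂ := q / conj q

/-- `ς = |q|²`, as a complex scalar. -/
noncomputable def vsig (q : ℂ) : ℂ := (‖q‖ : ℂ) ^ 2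

/-- `σ² = 1 + |q|²`, as a complex scalar. -/
noncomputable def sigSq (q : ℂ) : ℂ := 1 + vsig q

/-- The matrix elements `v_{i,j}(x, y)`, `i, j ∈ {-1, 0, 1}` (and `0` for other indices). -/
noncomputable def vij {A : Type*} [Ring A] [StarRing A] [Module ℂ A]
    (q : ℂ) (x y : A) (i j : ℤ) : A :=
  if i = -1 then
    if j = -1 then x ^ 2
    else if j = 0 then -(sigSq q • (star y * x))
    else if j = 1 then -(q • star y ^ 2)
    else 0
  else if i = 0 then
    if j = -1 then zetaC q • (x * y)
    else if j = 0 then 1 - sigSq q • (star y * y)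
    else if j = 1 then star y * star x
    else 0
  else if i = 1 then
    if j = -1 then -((q * zetaC q) • y ^ 2)
    else if j = 0 then -(sigSq q • (star x * y))
    else if j = 1 then star x ^ 2
    else 0
  else 0

/-- The coefficients `λ_{r,p}` (and `0` for the two excluded index pairs). -/
noncomputable def lamRP (q : ℂ) (r p : ℤ) : ℂ :=
  if r = -1 ∧ p = 0 then sigSq q
  else if r = -1 ∧ p = 1 then -(vsig q)
  else if r = 0 ∧ p = -1 then -(vsig q * sigSq q)
  else if r = 0 ∧ p = 0 then 1 - vsig q ^ 2
  else if r = 0 ∧ p = 1 then sigSq q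
  else if r = 1 ∧ p = -1 then vsig q
  else if r = 1 ∧ p = 0 then -(vsig q * sigSq q)
  else 0

/-- Rotate a scalar-twisted commutation relation past an extra factor. -/
lemma mul_rot {A : Type*} [Ring A] [Module ℂ A] [IsScalarTower ℂ A A]
    {x y : A} {c : ℂ} (h : x * y = c • (y * x)) (z : A) :
    x * (y * z) = c • (y * (x * z)) := by
  rw [← mul_assoc, h, smul_mul_assoc, mul_assoc]

/-- Rotate a plain commutation relation past an extra factor. -/
lemma mul_swap' {A : Type*} [Ring A] {x y : A} (h : x * y = y * x) (z : A) :
    x * (y * z) = y * (x * z) := by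
  rw [← mul_assoc, h, mul_assoc]

/-- Rotate a reduction relation `x * y = 1 - c • n` past an extra factor. -/
lemma mul_red {A : Type*} [Ring A] [Module ℂ A] [IsScalarTower ℂ A A]
    {x y n : A} {c : ℂ} (h : x * y = 1 - c • n) (z : A) :
    x * (y * z) = z - c • (n * z) := by
  rw [← mul_assoc, h, sub_mul, one_mul, smul_mul_assoc]

set_option maxRecDepth 100000
set_option maxHeartbeats 0

theorem stmt9 (q : ℂ) (hq0 : 0 < ‖q‖) (hq1 : ‖q‖ < 1)
    {A : Type*} [NormedRing A] [StarRing A] [CStarRing A] [NormedAlgebra ℂ A]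
    [StarModule ℂ A] [CompleteSpace A]
    (α γ : A) (h : SUq2Rel q α γ) :
    ∀ r ∈ ({-1, 0, 1} : Finset ℤ), ∀ p ∈ ({-1, 0, 1} : Finset ℤ),
      (sigSq q * zetaC q ^ (r * (p - 1))) • (vij q α γ 0 r * vij q α γ 1 p)
        - (vsig q * sigSq q * zetaC q ^ (r * p)) • (vij q α γ 1 r * vij q α γ 0 p)
      = if r + p ∈ ({-1, 0, 1} : Finset ℤ) then lamRP q r p • vij q α γ 1 (r + p)
        else 0 := by
  obtain ⟨h1, h2, h3, h4⟩ := h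
  have hq : q ≠ 0 := by
    intro hq'
    rw [hq'] at hq0
    simp at hq0
  have hqc : conj q ≠ 0 := by
    simpa using hq
  have hvs : ((‖q‖ : ℂ) ^ 2) = q * conj q := by
    rw [← Complex.ofReal_pow, Complex.sq_norm, Complex.mul_conj]
  have hvs' : vsig q = q * conj q := hvs
  -- basic reduction relations
  have hAa : star α * α = 1 - (1 : ℂ) • (star γ * γ) := by
    rw [one_smul]; exact eq_sub_of_add_eq h1
  have haA : α * star α = 1 - (q * conj q) • (star γ * γ) := by
    rw [← hvs]; exact eq_sub_of_add_eq h2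
  -- commutation relations
  have r_ag : α * γ = conj q • (γ * α) := h3
  have r_ga : γ * α = (conj q)⁻¹ • (α * γ) := by
    rw [r_ag, smul_smul, inv_mul_cancel₀ hqc, one_smul]
  have r_GA : star γ * star α = q • (star α * star γ) := by
    have h' := congrArg star h3
    simp only [star_mul, star_smul, starRingEnd_apply, star_star] at h'
    exact h'
  have r_AG : star α * star γ = q⁻¹ • (star γ * star α) := by
    rw [r_GA, smul_smul, inv_mul_cancel₀ hq, one_smul]
  -- the Fuglede–Putnam type relation, via `star T * T = 0`
  have r_aG : α * star γ = q • (star γ * α) := by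
    have key : star (α * star γ - q • (star γ * α)) * (α * star γ - q • (star γ * α)) = 0 := by
      have s_ga := mul_rot r_ga
      have s_AG := mul_rot r_AG
      have s_gG := mul_swap' h4
      have s_Aa := mul_red hAa
      simp only [star_sub, star_mul, star_smul, star_star, starRingEnd_apply, mul_sub, sub_mul,
        smul_mul_assoc, mul_smul_comm, smul_smul, smul_sub, sub_smul, mul_assoc,
        r_ga, s_ga, r_AG, s_AG, h4, s_gG, hAa, s_Aa, one_smul, mul_one, one_mul]
      match_scalars <;> (field_simp; try ring)
    have := (CStarRing.star_mul_self_eq_zero_iff _).mp key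
    exact sub_eq_zero.mp this
  have r_Ga : star γ * α = q⁻¹ • (α * star γ) := by
    rw [r_aG, smul_smul, inv_mul_cancel₀ hq, one_smul]
  have r_gA : γ * star α = conj q • (star α * γ) := by
    have h' := congrArg star r_aG
    simp only [star_mul, star_smul, starRingEnd_apply, star_star] at h'
    exact h'
  have r_Ag : star α * γ = (conj q)⁻¹ • (γ * star α) := by
    rw [r_gA, smul_smul, inv_mul_cancel₀ hqc, one_smul]
  -- assoc variants of the normalization rules
  have m_ag := mul_rot r_ag
  have m_aG := mul_rot r_aG
  have m_Ag := mul_rot r_Ag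
  have m_AG := mul_rot r_AG
  have m_gG := mul_swap' h4
  have m_Aa := mul_red hAa
  have m_aA := mul_red haA
  intro r hr p hp
  fin_cases hr <;> fin_cases hp <;>
  · norm_num [vij, lamRP, Finset.mem_insert, Finset.mem_singleton, zpow_neg, pow_two, mul_inv]
    simp only [sq, mul_sub, sub_mul, mul_one, one_mul, mul_neg, neg_mul, smul_neg, neg_smul,
      smul_mul_assoc, mul_smul_comm, smul_smul, smul_sub, sub_smul, mul_assoc,
      r_ag, m_ag, r_aG, m_aG, r_Ag, m_Ag, r_AG, m_AG, h4, m_gG, hAa, m_Aa, haA, m_aA,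
      one_smul, one_mul, mul_one]
    match_scalars
    all_goals simp only [zetaC, sigSq, hvs', zpow_neg, zpow_ofNat, zpow_one, zpow_zero]
    all_goals try (field_simp [hq, hqc]; ring)
    all_goals try field_simp [hq, hqc]
    all_goals try ring
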